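/- The map (π₊, π₋) ↦ π₋δπ₊ is a bijection from the set of ordered pairs of pairings of [n] onto the set of alternating elements of PM(n), i.e., permutations α of ±[n] with δαδ = α⁻¹, no cycle meeting both k and −k, and sgn(α(k)) = −sgn(k) for all k. -/

import Mathlib

/-- The set `±[n] = {−n,…,−1,1,…,n}` of nonzero integers of absolute value at most `n`. -/
abbrev SignedIdx (n : ℕ) := {k : ℤ // k ≠ 0 ∧ k.natAbs ≤ n}

/-- The negation map `δ : k ↦ −k` on `±[n]`, as a permutation. -/
def negSigned (n : ℕ) : Equiv.Perm (SignedIdx n) :=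
  Function.Involutive.toPerm
    (fun k => ⟨-k.1, by simpa [Int.natAbs_neg] using k.2⟩)
    (fun k => by ext1; simp)

/-- A pairing of `[n]` extended to `±[n]` by the identity on negative integers:
an involution fixing every negative element and moving every positive element. -/
def PosPairing (n : ℕ) (π : Equiv.Perm (SignedIdx n)) : Prop :=
  π * π = 1 ∧ (∀ k : SignedIdx n, k.1 < 0 → π k = k) ∧
    ∀ k : SignedIdx n, 0 < k.1 → π k ≠ k

namespace Stmt16

variable {n : ℕ}

lemma delta_val (k : SignedIdx n) : (negSigned n k).1 = -k.1 := rfl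

lemma delta_delta (k : SignedIdx n) : negSigned n (negSigned n k) = k :=
  Subtype.ext (neg_neg _)

lemma delta_mul_self : negSigned n * negSigned n = 1 :=
  Equiv.ext fun k => delta_delta k

lemma delta_inv : (negSigned n)⁻¹ = negSigned n :=
  inv_eq_of_mul_eq_one_left delta_mul_self

lemma pp_apply_apply {π : Equiv.Perm (SignedIdx n)} (h : PosPairing n π)
    (k : SignedIdx n) : π (π k) = k := by
  have := congrArg (fun σ : Equiv.Perm (SignedIdx n) => σ k) h.1
  simpa using this

lemma pp_inv {π : Equiv.Perm (SignedIdx n)} (h : PosPairing n π) : π⁻¹ = π :=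
  inv_eq_of_mul_eq_one_left h.1

lemma pos_or_neg (k : SignedIdx n) : 0 < k.1 ∨ k.1 < 0 := by
  rcases lt_trichotomy k.1 0 with h | h | h
  · exact Or.inr h
  · exact absurd h k.2.1
  · exact Or.inl h

lemma pp_pos_of_pos {π : Equiv.Perm (SignedIdx n)} (h : PosPairing n π)
    {k : SignedIdx n} (hk : 0 < k.1) : 0 < (π k).1 := by
  rcases pos_or_neg (π k) with hp | hp
  · exact hp
  · exfalso
    have h1 : π (π k) = π k := h.2.1 _ hp
    rw [pp_apply_apply h] at h1
    exact h.2.2 k hk h1.symm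

/-- Key lemma: if `δαδ = α⁻¹` and `α` never negates an element, then no `α`-cycle
contains both `k` and `-k`. -/
lemma no_cross (α : Equiv.Perm (SignedIdx n))
    (h1 : negSigned n * α * negSigned n = α⁻¹)
    (h2 : ∀ y : SignedIdx n, α y ≠ negSigned n y) (k : SignedIdx n) :
    ¬ α.SameCycle k (negSigned n k) := by
  rintro ⟨j, hj⟩
  have hsemi : SemiconjBy (negSigned n) α α⁻¹ := by
    unfold SemiconjBy
    have := congrArg (fun σ => σ * negSigned n) h1
    simpa [mul_assoc, delta_mul_self] using this
  have hz : ∀ m : ℤ, negSigned n * α ^ m = α ^ (-m) * negSigned n := by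
    intro m
    have h3 := (hsemi.zpow_right m)
    unfold SemiconjBy at h3
    rw [h3, inv_zpow, ← zpow_neg]
  have hzp : ∀ (m : ℤ) (x : SignedIdx n),
      negSigned n ((α ^ m) x) = (α ^ (-m)) (negSigned n x) := by
    intro m x
    have := congrArg (fun σ : Equiv.Perm (SignedIdx n) => σ x) (hz m)
    simpa using this
  rcases Int.even_or_odd j with ⟨m, hm⟩ | ⟨m, hm⟩
  · -- even case: j = m + m
    have key : negSigned n ((α ^ m) k) = (α ^ m) k := by
      rw [hzp m k, ← hj, hm, ← Equiv.Perm.mul_apply, ← zpow_add,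
        show -m + (m + m) = m from by ring]
    have := congrArg Subtype.val key
    rw [delta_val] at this
    have h0 : ((α ^ m) k).1 = 0 := by linarith
    exact ((α ^ m) k).2.1 h0
  · -- odd case: j = 2m+1
    have key : α ((α ^ m) k) = negSigned n ((α ^ m) k) := by
      have e1 : negSigned n ((α ^ m) k) = (α ^ (1 + m)) k := by
        rw [hzp m k, ← hj, hm, ← Equiv.Perm.mul_apply, ← zpow_add,
          show -m + (2 * m + 1) = 1 + m from by ring]
      rw [e1, zpow_add, zpow_one, Equiv.Perm.mul_apply]
    exact h2 _ key

end Stmt16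

open Stmt16 in
theorem stmt16 (n : ℕ) :
    Set.BijOn
      (fun p : Equiv.Perm (SignedIdx n) × Equiv.Perm (SignedIdx n) =>
        p.2 * negSigned n * p.1)
      {p | PosPairing n p.1 ∧ PosPairing n p.2}
      {α : Equiv.Perm (SignedIdx n) |
        negSigned n * α * negSigned n = α⁻¹ ∧
        (∀ k, ¬ α.SameCycle k (negSigned n k)) ∧
        (∀ k : SignedIdx n, 0 < k.1 ↔ ((α k).1 < 0))} := by
  constructor
  · -- MapsTo
    rintro ⟨π₁, π₂⟩ ⟨h₁', h₂'⟩
    replace h₁ : PosPairing n π₁ := h₁'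
    replace h₂ : PosPairing n π₂ := h₂'
    simp only [Set.mem_setOf_eq]
    have hαk : ∀ k : SignedIdx n,
        (π₂ * negSigned n * π₁) k = π₂ (negSigned n (π₁ k)) := fun k => rfl
    -- sign condition
    have hsign : ∀ k : SignedIdx n, 0 < k.1 ↔ ((π₂ * negSigned n * π₁) k).1 < 0 := by
      intro k
      rcases pos_or_neg k with hk | hk
      · have hp := pp_pos_of_pos h₁ hk
        have hd : (negSigned n (π₁ k)).1 < 0 := by rw [delta_val]; linarith
        rw [hαk, h₂.2.1 _ hd]
        simp [hk, hd]
      · have hfix : π₁ k = k := h₁.2.1 _ hk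
        have hdp : 0 < (negSigned n k).1 := by rw [delta_val]; linarith
        have := pp_pos_of_pos h₂ hdp
        rw [hαk, hfix]
        constructor
        · intro h; linarith
        · intro h; linarith
    -- conjugation condition
    have hconj : negSigned n * (π₂ * negSigned n * π₁) * negSigned n
        = (π₂ * negSigned n * π₁)⁻¹ := by
      have hinv : (π₂ * negSigned n * π₁)⁻¹ = π₁ * negSigned n * π₂ := by
        rw [mul_inv_rev, mul_inv_rev, pp_inv h₁, pp_inv h₂, delta_inv, mul_assoc]
      rw [hinv]
      apply Equiv.ext; intro k
      simp only [Equiv.Perm.mul_apply]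
      rcases pos_or_neg k with hk | hk
      · have hdk : (negSigned n k).1 < 0 := by rw [delta_val]; linarith
        rw [h₁.2.1 _ hdk, delta_delta]
        have hp2 := pp_pos_of_pos h₂ hk
        have hd2 : (negSigned n (π₂ k)).1 < 0 := by rw [delta_val]; linarith
        rw [h₁.2.1 _ hd2]
      · have hfix2 : π₂ k = k := h₂.2.1 _ hk
        rw [hfix2]
        have hdk : 0 < (negSigned n k).1 := by rw [delta_val]; linarith
        have hp1 := pp_pos_of_pos h₁ hdk
        have hd1 : (negSigned n (π₁ (negSigned n k))).1 < 0 := by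
          rw [delta_val]; linarith
        rw [h₂.2.1 _ hd1, delta_delta]
    refine ⟨hconj, ?_, hsign⟩
    refine no_cross _ hconj ?_
    intro y hy
    rcases pos_or_neg y with hky | hky
    · have hp := pp_pos_of_pos h₁ hky
      have hneg : (negSigned n (π₁ y)).1 < 0 := by rw [delta_val]; linarith
      rw [hαk, h₂.2.1 _ hneg] at hy
      have heq : π₁ y = y := by
        have := congrArg (negSigned n) hy
        rwa [delta_delta, delta_delta] at this
      exact h₁.2.2 y hky heq
    · have hfix : π₁ y = y := h₁.2.1 _ hky
      rw [hαk, hfix] at hy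
      have hdy : 0 < (negSigned n y).1 := by rw [delta_val]; linarith
      exact h₂.2.2 _ hdy hy
  constructor
  · -- InjOn
    rintro ⟨π₁, π₂⟩ ⟨h₁', h₂'⟩ ⟨σ₁, σ₂⟩ ⟨g₁', g₂'⟩ heq
    replace h₁ : PosPairing n π₁ := h₁'
    replace h₂ : PosPairing n π₂ := h₂'
    replace g₁ : PosPairing n σ₁ := g₁'
    replace g₂ : PosPairing n σ₂ := g₂'
    have heq' : π₂ * negSigned n * π₁ = σ₂ * negSigned n * σ₁ := heq
    have hfst : π₁ = σ₁ := by
      apply Equiv.ext; intro k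
      rcases pos_or_neg k with hk | hk
      · have e1 : (π₂ * negSigned n * π₁) k = negSigned n (π₁ k) := by
          have hp := pp_pos_of_pos h₁ hk
          have hd : (negSigned n (π₁ k)).1 < 0 := by rw [delta_val]; linarith
          simp only [Equiv.Perm.mul_apply]
          rw [h₂.2.1 _ hd]
        have e2 : (σ₂ * negSigned n * σ₁) k = negSigned n (σ₁ k) := by
          have hp := pp_pos_of_pos g₁ hk
          have hd : (negSigned n (σ₁ k)).1 < 0 := by rw [delta_val]; linarith
          simp only [Equiv.Perm.mul_apply]
          rw [g₂.2.1 _ hd]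
        have e3 : negSigned n (π₁ k) = negSigned n (σ₁ k) := by
          rw [← e1, ← e2, heq']
        have := congrArg (negSigned n) e3
        rwa [delta_delta, delta_delta] at this
      · rw [h₁.2.1 _ hk, g₁.2.1 _ hk]
    have hsnd : π₂ = σ₂ := by
      rw [hfst] at heq'
      exact mul_right_cancel (mul_right_cancel heq')
    exact Prod.ext hfst hsnd
  · -- SurjOn
    rintro α ⟨hconj, hcyc, hsign⟩
    have hconj' : ∀ k : SignedIdx n, negSigned n (α (negSigned n k)) = α⁻¹ k := by
      intro k
      have := congrArg (fun σ : Equiv.Perm (SignedIdx n) => σ k) hconj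
      simpa using this
    have hconj'' : ∀ k : SignedIdx n, α (negSigned n k) = negSigned n (α⁻¹ k) := by
      intro k
      rw [← hconj' k, delta_delta]
    have hsign_pos : ∀ k : SignedIdx n, 0 < k.1 → (α k).1 < 0 := fun k hk =>
      (hsign k).mp hk
    have hsign_neg : ∀ k : SignedIdx n, k.1 < 0 → 0 < (α k).1 := by
      intro k hk
      rcases pos_or_neg (α k) with h | h
      · exact h
      · exact absurd ((hsign k).mpr h) (by linarith)
    -- the two pairings
    have f₁inv : Function.Involutive
        (fun k : SignedIdx n => if 0 < k.1 then negSigned n (α k) else k) := by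
      intro k
      rcases pos_or_neg k with hk | hk
      · have h1 : (α k).1 < 0 := hsign_pos k hk
        have h2 : 0 < (negSigned n (α k)).1 := by rw [delta_val]; linarith
        simp only [if_pos hk, if_pos h2]
        rw [hconj'' (α k), delta_delta, Equiv.Perm.inv_def, Equiv.symm_apply_apply]
      · simp only [if_neg (not_lt.mpr hk.le)]
    have f₂inv : Function.Involutive
        (fun k : SignedIdx n => if 0 < k.1 then α (negSigned n k) else k) := by
      intro k
      rcases pos_or_neg k with hk | hk
      · have h1 : (negSigned n k).1 < 0 := by rw [delta_val]; linarith
        have h2 : 0 < (α (negSigned n k)).1 := hsign_neg _ h1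
        simp only [if_pos hk, if_pos h2]
        rw [hconj' k, Equiv.Perm.inv_def, Equiv.apply_symm_apply]
      · simp only [if_neg (not_lt.mpr hk.le)]
    set π₁ := Function.Involutive.toPerm _ f₁inv with hπ₁
    set π₂ := Function.Involutive.toPerm _ f₂inv with hπ₂
    have hπ₁k : ∀ k : SignedIdx n,
        π₁ k = if 0 < k.1 then negSigned n (α k) else k := fun k => rfl
    have hπ₂k : ∀ k : SignedIdx n,
        π₂ k = if 0 < k.1 then α (negSigned n k) else k := fun k => rfl
    have pp₁ : PosPairing n π₁ := by
      refine ⟨Equiv.ext fun k => ?_, fun k hk => ?_, fun k hk hfix => ?_⟩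
      · have := f₁inv k
        simpa [Equiv.Perm.mul_apply, hπ₁k] using this
      · rw [hπ₁k, if_neg (not_lt.mpr hk.le)]
      · rw [hπ₁k, if_pos hk] at hfix
        have : α k = negSigned n k := by
          have := congrArg (negSigned n) hfix
          rwa [delta_delta] at this
        exact hcyc k ⟨1, by simpa using this⟩
    have pp₂ : PosPairing n π₂ := by
      refine ⟨Equiv.ext fun k => ?_, fun k hk => ?_, fun k hk hfix => ?_⟩
      · have := f₂inv k
        simpa [Equiv.Perm.mul_apply, hπ₂k] using this
      · rw [hπ₂k, if_neg (not_lt.mpr hk.le)]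
      · rw [hπ₂k, if_pos hk] at hfix
        have hinv : (α ^ (-1 : ℤ)) k = negSigned n k := by
          have := congrArg (fun x => α⁻¹ x) hfix
          rw [Equiv.Perm.inv_def, Equiv.symm_apply_apply, ← Equiv.Perm.inv_def] at this
          simpa [zpow_neg, zpow_one] using this.symm
        exact hcyc k ⟨-1, hinv⟩
    refine ⟨(π₁, π₂), ⟨pp₁, pp₂⟩, ?_⟩
    apply Equiv.ext; intro k
    simp only [Equiv.Perm.mul_apply]
    rcases pos_or_neg k with hk | hk
    · have h1 : (α k).1 < 0 := hsign_pos k hk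
      rw [hπ₁k, if_pos hk, delta_delta, hπ₂k, if_neg (not_lt.mpr h1.le)]
    · have h2 : 0 < (negSigned n k).1 := by rw [delta_val]; linarith
      rw [hπ₁k, if_neg (not_lt.mpr hk.le), hπ₂k, if_pos h2, delta_delta]
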